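/- Let (Ω, 𝔉, μ) be a finite measure space, let γ : ℝ^d → [0, ∞) be a nonnegative, convex, Lipschitz continuous function, let ε₀ ≥ 0, and let (εₙ)ₙ ⊂ [0, ∞) with εₙ → ε₀. For ε ≥ 0 define Φ_ε(W) := ∫_Ω γ_ε(W(x)) dμ(x) on L²(μ; ℝ^d). Then Φ_{εₙ} converges to Φ_{ε₀} on L²(μ; ℝ^d) in the sense of Mosco, namely: (M1) for every W ∈ L²(μ; ℝ^d) one has Φ_{εₙ}(W) → Φ_{ε₀}(W) as n → ∞ (so constant sequences are recovery sequences); and (M2) for every W ∈ L²(μ; ℝ^d) and every sequence (Wₙ)ₙ ⊂ L²(μ; ℝ^d) converging weakly to W (i.e. ⟪Wₙ, Z⟫ → ⟪W, Z⟫ for every Z ∈ L²(μ; ℝ^d)), one has liminf_{n→∞} Φ_{εₙ}(Wₙ) ≥ Φ_{ε₀}(W). -/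

import Mathlib

open Filter MeasureTheory

/-- The mollification `γ_ε := ρ_ε * γ`, with `γ_0 := γ`, where
`ρ_ε(x) = ε^{-d} ρ(x/ε)`. -/
noncomputable def mollify {d : ℕ} (ρ γ : EuclideanSpace ℝ (Fin d) → ℝ) (ε : ℝ)
    (x : EuclideanSpace ℝ (Fin d)) : ℝ :=
  if ε = 0 then γ x else ∫ y, (ε ^ d)⁻¹ * ρ (ε⁻¹ • y) * γ (x - y)

/-- Mosco convergence of the integral functionals `Φ_ε(W) := ∫_Ω γ_ε(W(x)) dμ(x)` on
`L²(μ; ℝ^d)` as `εₙ → ε₀`: (M1) `Φ_{εₙ}(W) → Φ_{ε₀}(W)` for every `W ∈ L²`, and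
(M2) whenever `Wₙ ⇀ W` weakly in `L²(μ; ℝ^d)` one has
`liminf_n Φ_{εₙ}(Wₙ) ≥ Φ_{ε₀}(W)` (liminf in the extended reals). -/
noncomputable def mg {d : ℕ} (ρ γ : EuclideanSpace ℝ (Fin d) → ℝ) (ε : ℝ)
    (x : EuclideanSpace ℝ (Fin d)) : ℝ :=
  ∫ z, ρ z * γ (x - ε • z)

section helpers

variable {d : ℕ} {ρ γ : EuclideanSpace ℝ (Fin d) → ℝ} {L : ℝ}

lemma integrable_kernel (hρ_smooth : Continuous ρ) (hρ_cpt : HasCompactSupport ρ)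
    (hγ_cont : Continuous γ) (ε : ℝ) (x : EuclideanSpace ℝ (Fin d)) :
    Integrable (fun z => ρ z * γ (x - ε • z)) := by
  apply Continuous.integrable_of_hasCompactSupport
  · exact hρ_smooth.mul (hγ_cont.comp (continuous_const.sub (continuous_const_smul ε)))
  · exact hρ_cpt.mul_right

lemma mg_lip_eps (hρ_smooth : Continuous ρ) (hρ_cpt : HasCompactSupport ρ)
    (hρ_nonneg : ∀ x, 0 ≤ ρ x)
    (hρ_supp : Function.support ρ ⊆ Metric.closedBall 0 1)
    (hρ_int : ∫ x, ρ x = 1)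
    (hL : 0 ≤ L) (hγ_lip : LipschitzWith (Real.toNNReal L) γ)
    (ε δ : ℝ) (x : EuclideanSpace ℝ (Fin d)) :
    |mg ρ γ ε x - mg ρ γ δ x| ≤ L * |ε - δ| := by
  have hγc := hγ_lip.continuous
  have h1 := integrable_kernel hρ_smooth hρ_cpt hγc ε x
  have h2 := integrable_kernel hρ_smooth hρ_cpt hγc δ x
  have hsub : mg ρ γ ε x - mg ρ γ δ x
      = ∫ z, (ρ z * γ (x - ε • z) - ρ z * γ (x - δ • z)) := (integral_sub h1 h2).symm
  rw [hsub, ← Real.norm_eq_abs]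
  have hbound : ∀ z, ‖ρ z * γ (x - ε • z) - ρ z * γ (x - δ • z)‖ ≤ ρ z * (L * |ε - δ|) := by
    intro z
    rw [← mul_sub, norm_mul, Real.norm_eq_abs, abs_of_nonneg (hρ_nonneg z)]
    rcases eq_or_ne (ρ z) 0 with h0 | h0
    · simp [h0]
    · have hz1 : ‖z‖ ≤ 1 := by
        have := hρ_supp (Function.mem_support.2 h0)
        simpa [Metric.mem_closedBall, dist_eq_norm] using this
      have hlipest : ‖γ (x - ε • z) - γ (x - δ • z)‖ ≤ L * (|ε - δ| * ‖z‖) := by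
        have := hγ_lip.dist_le_mul (x - ε • z) (x - δ • z)
        rw [dist_eq_norm] at this
        calc ‖γ (x - ε • z) - γ (x - δ • z)‖
            ≤ Real.toNNReal L * ‖(x - ε • z) - (x - δ • z)‖ := this
          _ = L * (|ε - δ| * ‖z‖) := by
              rw [Real.coe_toNNReal L hL]
              congr 1
              have h4 : (x - ε • z) - (x - δ • z) = (δ - ε) • z := by
                module
              rw [h4, norm_smul, Real.norm_eq_abs, abs_sub_comm]
      calc ρ z * ‖γ (x - ε • z) - γ (x - δ • z)‖
          ≤ ρ z * (L * (|ε - δ| * ‖z‖)) := by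
            exact mul_le_mul_of_nonneg_left hlipest (hρ_nonneg z)
        _ ≤ ρ z * (L * |ε - δ|) := by
            apply mul_le_mul_of_nonneg_left _ (hρ_nonneg z)
            have h3 : L * (|ε - δ| * ‖z‖) ≤ L * (|ε - δ| * 1) := by
              apply mul_le_mul_of_nonneg_left _ hL
              exact mul_le_mul_of_nonneg_left hz1 (abs_nonneg _)
            simpa using h3
  have hint : Integrable (fun z => ρ z * (L * |ε - δ|)) :=
    (hρ_smooth.integrable_of_hasCompactSupport hρ_cpt).mul_const _
  calc ‖∫ z, (ρ z * γ (x - ε • z) - ρ z * γ (x - δ • z))‖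
      ≤ ∫ z, ρ z * (L * |ε - δ|) :=
        norm_integral_le_of_norm_le hint (Filter.Eventually.of_forall hbound)
    _ = L * |ε - δ| := by rw [integral_mul_const, hρ_int, one_mul]

lemma mg_lip_x (hρ_smooth : Continuous ρ) (hρ_cpt : HasCompactSupport ρ)
    (hρ_nonneg : ∀ x, 0 ≤ ρ x) (hρ_int : ∫ x, ρ x = 1)
    (hL : 0 ≤ L) (hγ_lip : LipschitzWith (Real.toNNReal L) γ) (ε : ℝ) :
    LipschitzWith (Real.toNNReal L) (mg ρ γ ε) := by
  have hγc := hγ_lip.continuous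
  apply LipschitzWith.of_dist_le_mul
  intro x y
  have h1 := integrable_kernel hρ_smooth hρ_cpt hγc ε x
  have h2 := integrable_kernel hρ_smooth hρ_cpt hγc ε y
  rw [Real.dist_eq, Real.coe_toNNReal L hL]
  have hsub : mg ρ γ ε x - mg ρ γ ε y
      = ∫ z, (ρ z * γ (x - ε • z) - ρ z * γ (y - ε • z)) := (integral_sub h1 h2).symm
  rw [hsub, ← Real.norm_eq_abs]
  have hint : Integrable (fun z => ρ z * (L * dist x y)) :=
    (hρ_smooth.integrable_of_hasCompactSupport hρ_cpt).mul_const _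
  calc ‖∫ z, (ρ z * γ (x - ε • z) - ρ z * γ (y - ε • z))‖
      ≤ ∫ z, ρ z * (L * dist x y) := by
        apply norm_integral_le_of_norm_le hint (Filter.Eventually.of_forall ?_)
        intro z
        rw [← mul_sub, norm_mul, Real.norm_eq_abs, abs_of_nonneg (hρ_nonneg z)]
        apply mul_le_mul_of_nonneg_left _ (hρ_nonneg z)
        have := hγ_lip.dist_le_mul (x - ε • z) (y - ε • z)
        rw [dist_eq_norm] at this
        calc ‖γ (x - ε • z) - γ (y - ε • z)‖
            ≤ Real.toNNReal L * ‖(x - ε • z) - (y - ε • z)‖ := this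
          _ = L * dist x y := by
              rw [Real.coe_toNNReal L hL, dist_eq_norm]
              have h4 : (x - ε • z) - (y - ε • z) = x - y := by module
              rw [h4]
    _ = L * dist x y := by rw [integral_mul_const, hρ_int, one_mul]

lemma mg_nonneg (hρ_nonneg : ∀ x, 0 ≤ ρ x) (hγ_nonneg : ∀ x, 0 ≤ γ x) (ε : ℝ)
    (x : EuclideanSpace ℝ (Fin d)) : 0 ≤ mg ρ γ ε x :=
  integral_nonneg fun z => mul_nonneg (hρ_nonneg z) (hγ_nonneg _)

lemma mg_zero (hρ_int : ∫ x, ρ x = 1) (x : EuclideanSpace ℝ (Fin d)) :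
    mg ρ γ 0 x = γ x := by
  unfold mg
  simp only [zero_smul, sub_zero]
  rw [integral_mul_const, hρ_int, one_mul]

lemma mg_convex (hρ_smooth : Continuous ρ) (hρ_cpt : HasCompactSupport ρ)
    (hρ_nonneg : ∀ x, 0 ≤ ρ x) (hγ_convex : ConvexOn ℝ Set.univ γ)
    (hγ_cont : Continuous γ) (ε : ℝ) :
    ConvexOn ℝ Set.univ (mg ρ γ ε) := by
  refine ⟨convex_univ, fun x _ y _ a b ha hb hab => ?_⟩
  unfold mg
  have h1 := integrable_kernel hρ_smooth hρ_cpt hγ_cont ε x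
  have h2 := integrable_kernel hρ_smooth hρ_cpt hγ_cont ε y
  have key : ∀ z, ρ z * γ ((a • x + b • y) - ε • z)
      ≤ a * (ρ z * γ (x - ε • z)) + b * (ρ z * γ (y - ε • z)) := by
    intro z
    have hco : (a • x + b • y) - ε • z = a • (x - ε • z) + b • (y - ε • z) := by
      have h5 : a • (x - ε • z) + b • (y - ε • z)
          = a • x + b • y - (a + b) • (ε • z) := by module
      rw [h5, hab, one_smul]
    have hcvx := hγ_convex.2 (Set.mem_univ (x - ε • z)) (Set.mem_univ (y - ε • z)) ha hb hab
    simp only [smul_eq_mul] at hcvx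
    rw [hco]
    calc ρ z * γ (a • (x - ε • z) + b • (y - ε • z))
        ≤ ρ z * (a * γ (x - ε • z) + b * γ (y - ε • z)) :=
          mul_le_mul_of_nonneg_left hcvx (hρ_nonneg z)
      _ = a * (ρ z * γ (x - ε • z)) + b * (ρ z * γ (y - ε • z)) := by ring
  calc (∫ z, ρ z * γ ((a • x + b • y) - ε • z))
      ≤ ∫ z, (a * (ρ z * γ (x - ε • z)) + b * (ρ z * γ (y - ε • z))) := by
        apply integral_mono _ ((h1.const_mul a).add (h2.const_mul b)) key
        · exact integrable_kernel hρ_smooth hρ_cpt hγ_cont ε _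
    _ = a • (∫ z, ρ z * γ (x - ε • z)) + b • (∫ z, ρ z * γ (y - ε • z)) := by
        rw [integral_add (h1.const_mul a) (h2.const_mul b),
          integral_const_mul, integral_const_mul]
        rfl

end helpers

section helpers2

variable {d : ℕ} {ρ γ : EuclideanSpace ℝ (Fin d) → ℝ} {L : ℝ}

lemma mollify_eq (hρ_int : ∫ x, ρ x = 1) {ε : ℝ} (hε : 0 ≤ ε)
    (x : EuclideanSpace ℝ (Fin d)) : mollify ρ γ ε x = mg ρ γ ε x := by
  rcases eq_or_lt_of_le hε with h | h
  · rw [mollify, if_pos h.symm, ← h, mg_zero hρ_int]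
  · have hne : ε ≠ 0 := ne_of_gt h
    rw [mollify, if_neg hne]
    have hco := MeasureTheory.Measure.integral_comp_smul_of_nonneg (volume)
        (fun y => (ε ^ d)⁻¹ * ρ (ε⁻¹ • y) * γ (x - y)) ε (hR := hε)
    simp only [smul_smul, inv_mul_cancel₀ hne, one_smul,
      finrank_euclideanSpace_fin, smul_eq_mul, mul_assoc] at hco
    rw [integral_const_mul] at hco
    have hpow : ((ε : ℝ) ^ d)⁻¹ ≠ 0 := inv_ne_zero (pow_ne_zero d hne)
    have := mul_left_cancel₀ hpow hco
    rw [mg]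
    simp only [mul_assoc]
    rw [← this]

lemma mg_growth (hρ_smooth : Continuous ρ) (hρ_cpt : HasCompactSupport ρ)
    (hρ_nonneg : ∀ x, 0 ≤ ρ x)
    (hρ_supp : Function.support ρ ⊆ Metric.closedBall 0 1)
    (hρ_int : ∫ x, ρ x = 1) (hγ_nonneg : ∀ x, 0 ≤ γ x)
    (hL : 0 ≤ L) (hγ_lip : LipschitzWith (Real.toNNReal L) γ)
    (ε : ℝ) (x : EuclideanSpace ℝ (Fin d)) :
    |mg ρ γ ε x| ≤ γ 0 + L * |ε| + L * ‖x‖ := by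
  rw [abs_of_nonneg (mg_nonneg hρ_nonneg hγ_nonneg ε x)]
  have h1 := mg_lip_eps hρ_smooth hρ_cpt hρ_nonneg hρ_supp hρ_int hL hγ_lip ε 0 x
  rw [mg_zero hρ_int, sub_zero] at h1
  have h2 : mg ρ γ ε x - γ x ≤ L * |ε| := (abs_le.1 h1).2
  have h3 := hγ_lip.dist_le_mul x 0
  rw [Real.dist_eq, Real.coe_toNNReal L hL, dist_eq_norm, sub_zero] at h3
  have h4 : γ x - γ 0 ≤ L * ‖x‖ := (abs_le.1 h3).2
  linarith

lemma integrable_mg_comp (hρ_smooth : Continuous ρ) (hρ_cpt : HasCompactSupport ρ)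
    (hρ_nonneg : ∀ x, 0 ≤ ρ x)
    (hρ_supp : Function.support ρ ⊆ Metric.closedBall 0 1)
    (hρ_int : ∫ x, ρ x = 1) (hγ_nonneg : ∀ x, 0 ≤ γ x)
    (hL : 0 ≤ L) (hγ_lip : LipschitzWith (Real.toNNReal L) γ)
    (ε : ℝ) {Ω : Type*} [MeasurableSpace Ω] {μ : Measure Ω} [IsFiniteMeasure μ]
    {W : Ω → EuclideanSpace ℝ (Fin d)} (hW : MemLp W 2 μ) :
    Integrable (fun a => mg ρ γ ε (W a)) μ := by
  have hWi : Integrable W μ :=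
    memLp_one_iff_integrable.1 (hW.mono_exponent (by norm_num))
  apply Integrable.mono' ((integrable_const (γ 0 + L * |ε|)).add (hWi.norm.const_mul L))
  · exact (mg_lip_x hρ_smooth hρ_cpt hρ_nonneg hρ_int hL hγ_lip
      ε).continuous.comp_aestronglyMeasurable hW.1
  · apply Filter.Eventually.of_forall
    intro a
    have := mg_growth hρ_smooth hρ_cpt hρ_nonneg hρ_supp hρ_int hγ_nonneg hL hγ_lip ε (W a)
    simpa [Real.norm_eq_abs, add_assoc] using this

lemma convex_fderiv_le {F : Type*} [NormedAddCommGroup F] [NormedSpace ℝ F] {h : F → ℝ}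
    (hconv : ConvexOn ℝ Set.univ h) (hdiff : ∀ v, DifferentiableAt ℝ h v)
    (v w : F) : h v + fderiv ℝ h v (w - v) ≤ h w := by
  set c : ℝ → F := fun t => v + t • (w - v) with hc
  have hφconv : ConvexOn ℝ Set.univ (fun t => h (c t)) := by
    have h0 := hconv.comp_affineMap (AffineMap.lineMap v w : ℝ →ᵃ[ℝ] F)
    rw [Set.preimage_univ] at h0
    have : (h ∘ (AffineMap.lineMap v w : ℝ →ᵃ[ℝ] F)) = fun t => h (c t) := by
      funext t
      simp [Function.comp, AffineMap.lineMap_apply_module', hc, add_comm]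
    rwa [this] at h0
  have hder : HasDerivAt (fun t => h (c t)) (fderiv ℝ h v (w - v)) 0 := by
    have h1 : HasDerivAt c (w - v) 0 := by
      rw [hc]
      simpa only [one_smul] using ((hasDerivAt_id' (x := (0 : ℝ))).smul_const (w - v)).const_add v
    have h2 : HasFDerivAt h (fderiv ℝ h (c 0)) (c 0) := (hdiff (c 0)).hasFDerivAt
    have h3 := h2.comp_hasDerivAt 0 h1
    simpa [hc, Function.comp_def] using h3
  have hsl := hφconv.le_slope_of_hasDerivAt (Set.mem_univ 0) (Set.mem_univ 1) one_pos hder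
  rw [slope_def_field] at hsl
  have hc1 : c 1 = w := by simp [hc]
  have hc0 : c 0 = v := by simp [hc]
  rw [hc1, hc0] at hsl
  have : fderiv ℝ h v (w - v) ≤ h w - h v := by
    simpa using hsl
  linarith

lemma mg_contDiff (hρ_smooth : ContDiff ℝ (⊤ : ℕ∞) ρ) (hρ_cpt : HasCompactSupport ρ)
    (hρ_int : ∫ x, ρ x = 1) (hγ_cont : Continuous γ)
    {δ : ℝ} (hδ : 0 < δ) : ContDiff ℝ 1 (mg ρ γ δ) := by
  have hne : δ ≠ 0 := hδ.ne'
  set ρδ : EuclideanSpace ℝ (Fin d) → ℝ := fun y => (δ ^ d)⁻¹ * ρ (δ⁻¹ • y) with hρδ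
  have hsm : ContDiff ℝ 1 ρδ :=
    (contDiff_const.mul (hρ_smooth.comp (contDiff_id.const_smul δ⁻¹))).of_le (by exact_mod_cast le_top : (1:ℕ∞) ≤ ((⊤:ℕ∞):WithTop ℕ∞))
  have hcs' : HasCompactSupport (fun y => ρ (δ⁻¹ • y)) :=
    hρ_cpt.comp_isClosedEmbedding
      (Homeomorph.smulOfNeZero δ⁻¹ (inv_ne_zero hne)).isClosedEmbedding
  have hcs : HasCompactSupport ρδ := hcs'.mul_left
  have hγloc : MeasureTheory.LocallyIntegrable γ := hγ_cont.locallyIntegrable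
  have hcd := hcs.contDiff_convolution_left (ContinuousLinearMap.mul ℝ ℝ) hsm hγloc
  have heq : mg ρ γ δ = convolution ρδ γ (ContinuousLinearMap.mul ℝ ℝ) volume := by
    funext x
    rw [← mollify_eq hρ_int hδ.le x, mollify, if_neg hne]
    simp [convolution, ContinuousLinearMap.mul_apply', hρδ]
  rw [heq]
  exact hcd

end helpers2

theorem mollify_integral_functional_mosco
    {d : ℕ} (hd : 1 ≤ d)
    (ρ : EuclideanSpace ℝ (Fin d) → ℝ)
    (hρ_smooth : ContDiff ℝ (⊤ : ℕ∞) ρ) (hρ_cpt : HasCompactSupport ρ)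
    (hρ_nonneg : ∀ x, 0 ≤ ρ x)
    (hρ_supp : Function.support ρ ⊆ Metric.closedBall 0 1)
    (hρ_int : ∫ x, ρ x = 1)
    (γ : EuclideanSpace ℝ (Fin d) → ℝ)
    (hγ_nonneg : ∀ x, 0 ≤ γ x)
    (hγ_convex : ConvexOn ℝ Set.univ γ)
    (L : ℝ) (hL : 0 ≤ L) (hγ_lip : LipschitzWith (Real.toNNReal L) γ)
    {Ω : Type*} [MeasurableSpace Ω] (μ : Measure Ω) [IsFiniteMeasure μ]
    (ε₀ : ℝ) (hε₀ : 0 ≤ ε₀)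
    (εseq : ℕ → ℝ) (hεseq_nonneg : ∀ n, 0 ≤ εseq n)
    (hεseq_conv : Filter.Tendsto εseq Filter.atTop (nhds ε₀)) :
    (∀ W : Ω → EuclideanSpace ℝ (Fin d), MemLp W 2 μ →
      Filter.Tendsto (fun n => ∫ x, mollify ρ γ (εseq n) (W x) ∂μ) Filter.atTop
        (nhds (∫ x, mollify ρ γ ε₀ (W x) ∂μ))) ∧
    (∀ W : Ω → EuclideanSpace ℝ (Fin d), MemLp W 2 μ →
      ∀ Wseq : ℕ → Ω → EuclideanSpace ℝ (Fin d), (∀ n, MemLp (Wseq n) 2 μ) →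
      (∀ Z : Ω → EuclideanSpace ℝ (Fin d), MemLp Z 2 μ →
        Filter.Tendsto (fun n => ∫ x, (inner ℝ (Wseq n x) (Z x) : ℝ) ∂μ) Filter.atTop
          (nhds (∫ x, (inner ℝ (W x) (Z x) : ℝ) ∂μ))) →
      ((∫ x, mollify ρ γ ε₀ (W x) ∂μ : ℝ) : EReal) ≤
        Filter.liminf
          (fun n => ((∫ x, mollify ρ γ (εseq n) (Wseq n x) ∂μ : ℝ) : EReal))
          Filter.atTop) := by
  have hρc : Continuous ρ := hρ_smooth.continuous
  have hγc : Continuous γ := hγ_lip.continuous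
  set m : ℝ := (μ Set.univ).toReal with hmdef
  have hm : 0 ≤ m := ENNReal.toReal_nonneg
  have lipeps := mg_lip_eps hρc hρ_cpt hρ_nonneg hρ_supp hρ_int hL hγ_lip
  have intmg : ∀ (ε : ℝ) (W : Ω → EuclideanSpace ℝ (Fin d)), MemLp W 2 μ →
      Integrable (fun a => mg ρ γ ε (W a)) μ := fun ε W hW =>
    integrable_mg_comp hρc hρ_cpt hρ_nonneg hρ_supp hρ_int hγ_nonneg hL hγ_lip ε hW
  have moll_int_eq : ∀ (ε : ℝ), 0 ≤ ε → ∀ (W : Ω → EuclideanSpace ℝ (Fin d)),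
      (∫ a, mollify ρ γ ε (W a) ∂μ) = ∫ a, mg ρ γ ε (W a) ∂μ := by
    intro ε hε W
    exact integral_congr_ae (Filter.Eventually.of_forall fun a => mollify_eq hρ_int hε (W a))
  -- key uniform estimate on integrals
  have hdistint : ∀ (ε' δ' : ℝ) (V : Ω → EuclideanSpace ℝ (Fin d)), MemLp V 2 μ →
      |(∫ a, mg ρ γ ε' (V a) ∂μ) - ∫ a, mg ρ γ δ' (V a) ∂μ| ≤ L * |ε' - δ'| * m := by
    intro ε' δ' V hV
    rw [← integral_sub (intmg ε' V hV) (intmg δ' V hV), ← Real.norm_eq_abs]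
    calc ‖∫ a, (mg ρ γ ε' (V a) - mg ρ γ δ' (V a)) ∂μ‖
        ≤ ∫ _a, (L * |ε' - δ'|) ∂μ :=
          norm_integral_le_of_norm_le (integrable_const _)
            (Filter.Eventually.of_forall fun a => by
              simpa [Real.norm_eq_abs] using lipeps ε' δ' (V a))
      _ = L * |ε' - δ'| * m := by rw [integral_const, smul_eq_mul, mul_comm]; rfl
  have habs : Filter.Tendsto (fun n => |εseq n - ε₀|) Filter.atTop (nhds 0) := by
    have h0 := hεseq_conv.sub_const ε₀
    rw [sub_self] at h0
    simpa using h0.abs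
  constructor
  · -- M1
    intro W hW
    rw [moll_int_eq ε₀ hε₀ W]
    simp only [fun n => moll_int_eq (εseq n) (hεseq_nonneg n) W]
    rw [tendsto_iff_dist_tendsto_zero]
    have hb : ∀ n, dist (∫ a, mg ρ γ (εseq n) (W a) ∂μ) (∫ a, mg ρ γ ε₀ (W a) ∂μ)
        ≤ L * |εseq n - ε₀| * m := by
      intro n
      rw [Real.dist_eq]
      exact hdistint (εseq n) ε₀ W hW
    have htd : Filter.Tendsto (fun n => L * |εseq n - ε₀| * m) Filter.atTop (nhds 0) := by
      simpa using (habs.const_mul L).mul_const m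
    exact squeeze_zero (fun n => dist_nonneg) hb htd
  · -- M2
    intro W hW Wseq hWseq hweak
    rw [moll_int_eq ε₀ hε₀ W]
    simp only [fun n => moll_int_eq (εseq n) (hεseq_nonneg n) (Wseq n)]
    set c : EReal := Filter.liminf
      (fun n => ((∫ a, mg ρ γ (εseq n) (Wseq n a) ∂μ : ℝ) : EReal)) Filter.atTop with hcdef
    set A : ℝ := ∫ a, mg ρ γ ε₀ (W a) ∂μ with hAdef
    -- main claim
    have claim : ∀ δ : ℝ, 0 < δ → ((A - 2 * (L * m) * |δ - ε₀| : ℝ) : EReal) ≤ c := by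
      intro δ hδ
      have hconv : ConvexOn ℝ Set.univ (mg ρ γ δ) :=
        mg_convex hρc hρ_cpt hρ_nonneg hγ_convex hγc δ
      have hcd : ContDiff ℝ 1 (mg ρ γ δ) := mg_contDiff hρ_smooth hρ_cpt hρ_int hγc hδ
      have hdiff : ∀ v, DifferentiableAt ℝ (mg ρ γ δ) v := fun v =>
        (hcd.differentiable one_ne_zero).differentiableAt
      have hlip := mg_lip_x hρc hρ_cpt hρ_nonneg hρ_int hL hγ_lip δ
      have hgradb : ∀ v, ‖fderiv ℝ (mg ρ γ δ) v‖ ≤ L := fun v => by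
        simpa [Real.coe_toNNReal L hL] using norm_fderiv_le_of_lipschitz ℝ (f := mg ρ γ δ) (x₀ := v) hlip
      set G : Ω → EuclideanSpace ℝ (Fin d) := fun a =>
        (InnerProductSpace.toDual ℝ (EuclideanSpace ℝ (Fin d))).symm (fderiv ℝ (mg ρ γ δ) (W a)) with hGdef
      have hGm : AEStronglyMeasurable G μ := by
        have hGcont : Continuous (fun v : EuclideanSpace ℝ (Fin d) =>
            (InnerProductSpace.toDual ℝ (EuclideanSpace ℝ (Fin d))).symm (fderiv ℝ (mg ρ γ δ) v)) :=
          (InnerProductSpace.toDual ℝ _).symm.continuous.comp (hcd.continuous_fderiv one_ne_zero)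
        exact hGcont.comp_aestronglyMeasurable hW.1
      have hGb : ∀ a, ‖G a‖ ≤ L := fun a => by
        rw [hGdef]
        simpa only [LinearIsometryEquiv.norm_map] using hgradb (W a)
      have hG2 : MemLp G 2 μ := MemLp.of_bound hGm L (Filter.Eventually.of_forall hGb)
      have hinner : ∀ (a : Ω) (u : EuclideanSpace ℝ (Fin d)),
          (inner ℝ u (G a) : ℝ) = fderiv ℝ (mg ρ γ δ) (W a) u := by
        intro a u
        rw [real_inner_comm, hGdef]
        exact InnerProductSpace.toDual_symm_apply
      have hnormint : ∀ (V : Ω → EuclideanSpace ℝ (Fin d)), MemLp V 2 μ →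
          Integrable (fun a => ‖V a‖) μ := fun V hV =>
        (memLp_one_iff_integrable.1 (hV.mono_exponent (by norm_num))).norm
      have hIG : ∀ (V : Ω → EuclideanSpace ℝ (Fin d)), MemLp V 2 μ →
          Integrable (fun a => (inner ℝ (V a) (G a) : ℝ)) μ := by
        intro V hV
        apply Integrable.mono' (((hnormint V hV)).const_mul L)
        · exact hV.1.inner hGm
        · apply Filter.Eventually.of_forall
          intro a
          calc ‖(inner ℝ (V a) (G a) : ℝ)‖ ≤ ‖V a‖ * ‖G a‖ := norm_inner_le_norm _ _
            _ ≤ L * ‖V a‖ := by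
                rw [mul_comm]
                exact mul_le_mul_of_nonneg_right (hGb a) (norm_nonneg _)
      have hweakG := hweak G hG2
      set bseq : ℕ → ℝ := fun n =>
        (∫ a, mg ρ γ δ (W a) ∂μ) + ((∫ a, (inner ℝ (Wseq n a) (G a) : ℝ) ∂μ)
          - ∫ a, (inner ℝ (W a) (G a) : ℝ) ∂μ) - L * |εseq n - δ| * m with hbdef
      have hble : ∀ n, bseq n ≤ ∫ a, mg ρ γ (εseq n) (Wseq n a) ∂μ := by
        intro n
        have step1 : (∫ a, mg ρ γ δ (W a) ∂μ) + ((∫ a, (inner ℝ (Wseq n a) (G a) : ℝ) ∂μ)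
            - ∫ a, (inner ℝ (W a) (G a) : ℝ) ∂μ) ≤ ∫ a, mg ρ γ δ (Wseq n a) ∂μ := by
          have hIGn := hIG _ (hWseq n)
          have hIGW := hIG _ hW
          have hIGsub : Integrable (fun a => (inner ℝ (Wseq n a) (G a) : ℝ)
              - (inner ℝ (W a) (G a) : ℝ)) μ := hIGn.sub hIGW
          have hint1 : Integrable (fun a => mg ρ γ δ (W a)
              + ((inner ℝ (Wseq n a) (G a) : ℝ) - (inner ℝ (W a) (G a) : ℝ))) μ :=
            (intmg δ W hW).add hIGsub
          have hptr : ∀ a, mg ρ γ δ (W a) + ((inner ℝ (Wseq n a) (G a) : ℝ)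
              - (inner ℝ (W a) (G a) : ℝ)) ≤ mg ρ γ δ (Wseq n a) := by
            intro a
            have := convex_fderiv_le hconv hdiff (W a) (Wseq n a)
            rw [← hinner a (Wseq n a - W a), inner_sub_left] at this
            linarith
          have hmono := integral_mono hint1 (intmg δ (Wseq n) (hWseq n)) hptr
          rwa [integral_add (intmg δ W hW) hIGsub, integral_sub hIGn hIGW] at hmono
        have step2 : (∫ a, mg ρ γ δ (Wseq n a) ∂μ) - L * |εseq n - δ| * m
            ≤ ∫ a, mg ρ γ (εseq n) (Wseq n a) ∂μ := by
          have h1 := hdistint (εseq n) δ (Wseq n) (hWseq n)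
          rw [abs_sub_comm] at h1
          have h2 := (abs_le.1 h1).2
          linarith
        rw [hbdef]
        dsimp only
        linarith
      have hbtend : Filter.Tendsto bseq Filter.atTop
          (nhds ((∫ a, mg ρ γ δ (W a) ∂μ) - L * |ε₀ - δ| * m)) := by
        have h1 : Filter.Tendsto (fun n => (∫ a, (inner ℝ (Wseq n a) (G a) : ℝ) ∂μ)
            - ∫ a, (inner ℝ (W a) (G a) : ℝ) ∂μ) Filter.atTop (nhds 0) := by
          have := hweakG.sub_const (∫ a, (inner ℝ (W a) (G a) : ℝ) ∂μ)
          rwa [sub_self] at this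
        have h2 : Filter.Tendsto (fun n => L * |εseq n - δ| * m) Filter.atTop
            (nhds (L * |ε₀ - δ| * m)) := by
          have h3 : Filter.Tendsto (fun n => |εseq n - δ|) Filter.atTop (nhds (|ε₀ - δ|)) :=
            (continuous_abs.tendsto _).comp (hεseq_conv.sub_const δ)
          exact (h3.const_mul L).mul_const m
        have := ((tendsto_const_nhds (x := ∫ a, mg ρ γ δ (W a) ∂μ)).add h1).sub h2
        simpa using this
      have hBle : ((((∫ a, mg ρ γ δ (W a) ∂μ) - L * |ε₀ - δ| * m : ℝ)) : EReal) ≤ c := by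
        rw [hcdef]
        have hlim1 : Filter.liminf (fun n => ((bseq n : ℝ) : EReal)) Filter.atTop
            = (((∫ a, mg ρ γ δ (W a) ∂μ) - L * |ε₀ - δ| * m : ℝ) : EReal) :=
          (EReal.tendsto_coe.2 hbtend).liminf_eq
        rw [← hlim1]
        exact Filter.liminf_le_liminf
          (Filter.Eventually.of_forall fun n => EReal.coe_le_coe_iff.2 (hble n))
          Filter.isBounded_ge_of_bot Filter.isCobounded_ge_of_top
      refine le_trans ?_ hBle
      rw [EReal.coe_le_coe_iff]
      have hAh : |A - ∫ a, mg ρ γ δ (W a) ∂μ| ≤ L * |ε₀ - δ| * m := hdistint ε₀ δ W hW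
      have h5 := (abs_le.1 hAh).2
      have h6 : |δ - ε₀| = |ε₀ - δ| := abs_sub_comm _ _
      have h7 : 0 ≤ L * |ε₀ - δ| * m :=
        mul_nonneg (mul_nonneg hL (abs_nonneg _)) hm
      rw [h6]
      nlinarith [abs_nonneg (ε₀ - δ)]
    -- conclude by letting δ → ε₀ from the right
    have hδpos : ∀ k : ℕ, (0 : ℝ) < ε₀ + 1 / (k + 1) := fun k =>
      add_pos_of_nonneg_of_pos hε₀ (by positivity)
    have hA : Filter.Tendsto (fun k : ℕ => (A - 2 * (L * m) * |(ε₀ + 1 / (k + 1)) - ε₀| : ℝ))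
        Filter.atTop (nhds A) := by
      have h0 : Filter.Tendsto (fun k : ℕ => ((ε₀ + 1 / (k + 1)) - ε₀ : ℝ)) Filter.atTop
          (nhds 0) := by
        have : Filter.Tendsto (fun k : ℕ => (1 / (k + 1) : ℝ)) Filter.atTop (nhds 0) :=
          tendsto_one_div_add_atTop_nhds_zero_nat
        simpa using this
      have h1 := (h0.abs.const_mul (2 * (L * m)))
      have h2 := (tendsto_const_nhds (x := A)).sub h1
      simpa using h2
    exact le_of_tendsto (EReal.tendsto_coe.2 hA)
      (Filter.Eventually.of_forall fun k => claim _ (hδpos k))
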